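/- A nonempty regular language L over alphabet Σ is prefix-closed (i.e., every prefix of every word in L is in L) if and only if L is accepted by some nondeterministic finite automaton in which every state is a final state. -/

import Mathlib

open Set

lemma nfa_evalFrom_empty {α σ : Type*} (M : NFA α σ) (v : List α) :
    M.evalFrom ∅ v = ∅ := by
  induction v with
  | nil => rfl
  | cons a v ih =>
      show M.evalFrom (M.stepSet ∅ a) v = ∅
      rw [M.stepSet_empty, ih]

theorem prefix_closed_iff_nfa_all_final {α : Type} (L : Language α)
    (hreg : L.IsRegular) (hne : ∃ w, w ∈ L) :
    (∀ w ∈ L, ∀ u, u <+: w → u ∈ L) ↔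
      ∃ (σ : Type) (_ : Fintype σ) (M : NFA α σ),
        M.accept = Set.univ ∧ M.accepts = L := by
  constructor
  · intro hcl
    obtain ⟨σ, hfin, M, hM⟩ := hreg
    classical
    -- the co-accessible states
    set Good : σ → Prop := fun q => ∃ v, M.evalFrom q v ∈ M.accept with hGood
    refine ⟨{q : σ // Good q}, Subtype.fintype _, ?_, ?_, ?_⟩
    · exact { step := fun s a => {t | t.val = M.step s.val a},
              start := {t | t.val = M.start},
              accept := Set.univ }
    · rfl
    · set N : NFA α {q : σ // Good q} :=
        { step := fun s a => {t | t.val = M.step s.val a},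
          start := {t | t.val = M.start},
          accept := Set.univ } with hN
      -- soundness: any reached state tracks the DFA
      have sound : ∀ x : List α, ∀ s ∈ N.eval x, s.val = M.evalFrom M.start x := by
        intro x
        induction x using List.reverseRecOn with
        | nil => intro s hs; exact hs
        | append_singleton x a ih =>
            intro s hs
            rw [NFA.eval_append_singleton] at hs
            obtain ⟨t, ht, hst⟩ := N.mem_stepSet.1 hs
            have : s.val = M.step t.val a := hst
            rw [this, ih t ht, DFA.evalFrom_append_singleton]
      -- completeness
      have compl : ∀ x : List α, (∀ u, u <+: x → Good (M.evalFrom M.start u)) →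
          ∃ s ∈ N.eval x, s.val = M.evalFrom M.start x := by
        intro x
        induction x using List.reverseRecOn with
        | nil =>
            intro h
            exact ⟨⟨M.start, h [] (List.nil_prefix)⟩, rfl, rfl⟩
        | append_singleton x a ih =>
            intro h
            obtain ⟨s, hs, hsv⟩ := ih (fun u hu => h u (hu.trans ⟨[a], rfl⟩))
            have hg : Good (M.evalFrom M.start (x ++ [a])) :=
              h (x ++ [a]) (List.prefix_refl _)
            refine ⟨⟨M.evalFrom M.start (x ++ [a]), hg⟩, ?_, rfl⟩
            rw [NFA.eval_append_singleton]
            refine N.mem_stepSet.2 ⟨s, hs, ?_⟩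
            show M.evalFrom M.start (x ++ [a]) = M.step s.val a
            rw [hsv, DFA.evalFrom_append_singleton]
      ext x
      constructor
      · intro hx
        obtain ⟨s, _, hs⟩ := hx
        have hval := sound x s hs
        obtain ⟨v, hv⟩ := s.2
        rw [hval] at hv
        have hxv : x ++ v ∈ L := by
          rw [← hM]
          show M.evalFrom M.start (x ++ v) ∈ M.accept
          rwa [DFA.evalFrom_of_append]
        exact hcl _ hxv x ⟨v, rfl⟩
      · intro hx
        have hpre : ∀ u, u <+: x → Good (M.evalFrom M.start u) := by
          intro u ⟨v, huv⟩
          refine ⟨v, ?_⟩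
          rw [← DFA.evalFrom_of_append, huv]
          rw [← hM] at hx
          exact hx
        obtain ⟨s, hs, _⟩ := compl x hpre
        exact ⟨s, trivial, hs⟩
  · rintro ⟨σ, hfin, M, hacc, hM⟩ w hw u ⟨v, huv⟩
    rw [← hM] at hw ⊢
    obtain ⟨s, _, hs⟩ := hw
    have hne' : M.eval u ≠ ∅ := by
      intro h
      rw [← huv] at hs
      have : M.eval (u ++ v) = M.evalFrom (M.eval u) v := by
        simp [NFA.eval, NFA.evalFrom, List.foldl_append]
      rw [this, h, nfa_evalFrom_empty] at hs
      exact hs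
    obtain ⟨t, ht⟩ := Set.nonempty_iff_ne_empty.2 hne'
    exact ⟨t, by rw [hacc]; trivial, ht⟩
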